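/- The point (x,y) = (1/2 - μ, √3/2) is a critical point of the effective potential U(x,y) = (x²+y²)/2 + (1-μ)/δ₀ + μ/δ₁ of the planar circular restricted three-body problem (with n = 1), i.e., both partial derivatives of U vanish there. -/

import Mathlib

/-- `L4 = (1/2 - μ, √3/2)` is a critical point of the effective potential
`U(x,y) = (x²+y²)/2 + (1-μ)/δ₀ + μ/δ₁` of the planar CR3BP (with `n = 1`). -/
theorem L4_critical_point (μ : ℝ) (hμ0 : 0 < μ) (hμ1 : μ < 1) :
    fderiv ℝ
      (fun p : ℝ × ℝ =>
        (p.1 ^ 2 + p.2 ^ 2) / 2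
          + (1 - μ) / Real.sqrt ((p.1 + μ) ^ 2 + p.2 ^ 2)
          + μ / Real.sqrt ((p.1 - (1 - μ)) ^ 2 + p.2 ^ 2))
      (1 / 2 - μ, Real.sqrt 3 / 2) = 0 := by
  set x0 : ℝ × ℝ := (1 / 2 - μ, Real.sqrt 3 / 2) with hx0
  have h3 : Real.sqrt 3 ^ 2 = 3 := Real.sq_sqrt (by norm_num)
  have hg0 : (x0.1 + μ) * (x0.1 + μ) + x0.2 * x0.2 = 1 := by
    simp only [hx0]; nlinarith [h3]
  have hg1 : (x0.1 - (1 - μ)) * (x0.1 - (1 - μ)) + x0.2 * x0.2 = 1 := by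
    simp only [hx0]; nlinarith [h3]
  have hd0 := (((hasFDerivAt_fst (𝕜 := ℝ) (p := x0)).add_const μ).mul
      ((hasFDerivAt_fst (𝕜 := ℝ) (p := x0)).add_const μ)).add
      ((hasFDerivAt_snd (𝕜 := ℝ) (p := x0)).mul (hasFDerivAt_snd (𝕜 := ℝ) (p := x0)))
  have hd1 := (((hasFDerivAt_fst (𝕜 := ℝ) (p := x0)).sub_const (1 - μ)).mul
      ((hasFDerivAt_fst (𝕜 := ℝ) (p := x0)).sub_const (1 - μ))).add
      ((hasFDerivAt_snd (𝕜 := ℝ) (p := x0)).mul (hasFDerivAt_snd (𝕜 := ℝ) (p := x0)))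
  have hs0 : HasDerivAt Real.sqrt
      (1 / (2 * Real.sqrt ((x0.1 + μ) * (x0.1 + μ) + x0.2 * x0.2)))
      ((x0.1 + μ) * (x0.1 + μ) + x0.2 * x0.2) :=
    Real.hasDerivAt_sqrt (by rw [hg0]; norm_num)
  have hs1 : HasDerivAt Real.sqrt
      (1 / (2 * Real.sqrt ((x0.1 - (1 - μ)) * (x0.1 - (1 - μ)) + x0.2 * x0.2)))
      ((x0.1 - (1 - μ)) * (x0.1 - (1 - μ)) + x0.2 * x0.2) :=
    Real.hasDerivAt_sqrt (by rw [hg1]; norm_num)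
  have hne0 : Real.sqrt ((x0.1 + μ) * (x0.1 + μ) + x0.2 * x0.2) ≠ 0 := by rw [hg0]; simp
  have hne1 : Real.sqrt ((x0.1 - (1 - μ)) * (x0.1 - (1 - μ)) + x0.2 * x0.2) ≠ 0 := by
    rw [hg1]; simp
  have hs0' := (hs0.inv hne0).const_mul (1 - μ)
  have hs1' := (hs1.inv hne1).const_mul μ
  have hi0 := hs0'.comp_hasFDerivAt x0 hd0
  have hi1 := hs1'.comp_hasFDerivAt x0 hd1
  have hq := (((hasFDerivAt_fst (𝕜 := ℝ) (p := x0)).mul (hasFDerivAt_fst (𝕜 := ℝ) (p := x0))).add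
      ((hasFDerivAt_snd (𝕜 := ℝ) (p := x0)).mul (hasFDerivAt_snd (𝕜 := ℝ) (p := x0)))).const_mul (𝕜 := ℝ) ((2:ℝ)⁻¹)
  have htot := (hq.add hi0).add hi1
  have heq := htot.congr_of_eventuallyEq
    (f₁ := fun p : ℝ × ℝ =>
        (p.1 ^ 2 + p.2 ^ 2) / 2
          + (1 - μ) / Real.sqrt ((p.1 + μ) ^ 2 + p.2 ^ 2)
          + μ / Real.sqrt ((p.1 - (1 - μ)) ^ 2 + p.2 ^ 2))
    (Filter.Eventually.of_forall fun p => by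
      simp only [Function.comp_apply, Function.comp, Pi.add_apply, Pi.mul_apply, Pi.inv_apply, pow_two, div_eq_mul_inv, smul_eq_mul]
      ring)
  rw [heq.fderiv]
  have hs0v : Real.sqrt ((x0.1 + μ) * (x0.1 + μ) + x0.2 * x0.2) = 1 := by rw [hg0]; simp
  have hs1v : Real.sqrt ((x0.1 - (1 - μ)) * (x0.1 - (1 - μ)) + x0.2 * x0.2) = 1 := by
    rw [hg1]; simp
  have ha : (2:ℝ)⁻¹ * 2⁻¹ + Real.sqrt 3 / 2 * (Real.sqrt 3 / 2) = 1 := by nlinarith [h3]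
  have hb : ((2:ℝ)⁻¹ - 1) * ((2:ℝ)⁻¹ - 1) + Real.sqrt 3 / 2 * (Real.sqrt 3 / 2) = 1 := by
    nlinarith [h3]
  ext v <;>
  · simp only [hx0]
    simp
    rw [ha, hb, Real.sqrt_one]
    ring
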